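/- Let q be a prime power, let P ∈ 𝔽_q[x_1, …, x_n], let β ∈ ℤ_{≥0}^n, and let a ∈ 𝔽_q^n. Then mult(P^{(β)}, a) ≥ mult(P, a) − |β|, where P^{(β)} denotes the β-th Hasse derivative of P. -/

import Mathlib

/-- The `β`-th Hasse derivative of a multivariate polynomial `f`: the coefficient of
`y^β` in `f(x + y)`, as a polynomial in `x`. -/
noncomputable def hasseDeriv {m : ℕ} {F : Type*} [CommRing F]
    (β : Fin m →₀ ℕ) (f : MvPolynomial (Fin m) F) : MvPolynomial (Fin m) F :=
  MvPolynomial.coeff β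
    (MvPolynomial.eval₂ (MvPolynomial.C.comp MvPolynomial.C)
      (fun i => MvPolynomial.C (MvPolynomial.X i) + MvPolynomial.X i) f)

/-- The multiplicity of `f` at the point `a`: the supremum of all `M ∈ ℤ_{≥0}` such that
`f^{(β)}(a) = 0` for all `β` with `|β| < M`. -/
noncomputable def polyMult {m : ℕ} {F : Type*} [CommRing F]
    (f : MvPolynomial (Fin m) F) (a : Fin m → F) : ℕ∞ :=
  ⨆ M ∈ {M : ℕ | ∀ β : Fin m →₀ ℕ, (∑ i, β i) < M →
    MvPolynomial.eval a (hasseDeriv β f) = 0}, (M : ℕ∞)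

open MvPolynomial

section Aux

variable {m : ℕ} {F : Type*} [CommRing F]

lemma hasseDeriv_C (β : Fin m →₀ ℕ) (c : F) :
    hasseDeriv β (C c : MvPolynomial (Fin m) F) = if β = 0 then C c else 0 := by
  simp [hasseDeriv, eval₂_C, coeff_C, eq_comm]

lemma hasseDeriv_add (β : Fin m →₀ ℕ) (p q : MvPolynomial (Fin m) F) :
    hasseDeriv β (p + q) = hasseDeriv β p + hasseDeriv β q := by
  simp [hasseDeriv, eval₂_add, coeff_add]

lemma hasseDeriv_mul_X (β : Fin m →₀ ℕ) (p : MvPolynomial (Fin m) F) (i : Fin m) :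
    hasseDeriv β (p * X i) = hasseDeriv β p * X i +
      (if i ∈ β.support then hasseDeriv (β - Finsupp.single i 1) p else 0) := by
  simp only [hasseDeriv, eval₂_mul, eval₂_X, mul_add, coeff_add, coeff_mul_X']
  congr 1
  rw [mul_comm _ (MvPolynomial.C (X i)), coeff_C_mul, mul_comm]

lemma finsupp_sub_add_comm (δ β : Fin m →₀ ℕ) (i : Fin m) (h : δ i ≠ 0) :
    δ - Finsupp.single i 1 + β = δ + β - Finsupp.single i 1 := by
  ext j
  rcases eq_or_ne i j with rfl | hij
  · simp [Finsupp.add_apply, Finsupp.tsub_apply, Finsupp.single_apply]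
    omega
  · simp [Finsupp.add_apply, Finsupp.tsub_apply, Finsupp.single_apply, hij]

lemma coeff_hasseDeriv (f : MvPolynomial (Fin m) F) (β δ : Fin m →₀ ℕ) :
    coeff δ (hasseDeriv β f)
      = ((∏ j, ((δ + β) j).choose (β j) : ℕ) : F) * coeff (δ + β) f := by
  induction f using MvPolynomial.induction_on generalizing β δ with
  | C c =>
    rw [hasseDeriv_C]
    by_cases hβ : β = 0
    · subst hβ; simp [coeff_C]
    · have hδβ : (0 : Fin m →₀ ℕ) ≠ δ + β := by
        intro h
        apply hβ
        ext j
        have := DFunLike.congr_fun h j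
        simp only [Finsupp.add_apply, Finsupp.coe_zero, Pi.zero_apply] at this ⊢
        omega
      simp [if_neg hβ, coeff_C, if_neg hδβ]
  | add p q hp hq =>
    simp [hasseDeriv_add, coeff_add, hp, hq, mul_add]
  | mul_X p i hp =>
    rw [hasseDeriv_mul_X, coeff_add, coeff_mul_X', coeff_mul_X']
    by_cases hd : δ i = 0 <;> by_cases hb : β i = 0
    · -- both zero
      have h1 : i ∉ δ.support := by simp [Finsupp.mem_support_iff, hd]
      have h2 : i ∉ β.support := by simp [Finsupp.mem_support_iff, hb]
      have h3 : i ∉ (δ + β).support := by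
        simp [Finsupp.mem_support_iff, Finsupp.add_apply, hd, hb]
      simp [h1, h2, h3]
    · -- δ i = 0, β i ≠ 0
      have h1 : i ∉ δ.support := by simp [Finsupp.mem_support_iff, hd]
      have h2 : i ∈ β.support := by simp [Finsupp.mem_support_iff, hb]
      have h3 : i ∈ (δ + β).support := by
        simp only [Finsupp.mem_support_iff, Finsupp.add_apply]; omega
      rw [if_neg h1, if_pos h2, if_pos h3, zero_add, hp]
      have hidx : δ + (β - Finsupp.single i 1) = δ + β - Finsupp.single i 1 := by
        rw [add_comm δ (β - _), finsupp_sub_add_comm β δ i hb, add_comm β δ]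
      rw [hidx]
      congr 2
      refine Finset.prod_congr rfl fun j _ => ?_
      rcases eq_or_ne j i with rfl | hij
      · simp [Finsupp.tsub_apply, Finsupp.add_apply, Finsupp.single_apply, hd,
          Nat.choose_self]
      · simp [Finsupp.tsub_apply, Finsupp.add_apply, Finsupp.single_apply, Ne.symm hij]
    · -- δ i ≠ 0, β i = 0
      have h1 : i ∈ δ.support := by simp [Finsupp.mem_support_iff, hd]
      have h2 : i ∉ β.support := by simp [Finsupp.mem_support_iff, hb]
      have h3 : i ∈ (δ + β).support := by
        simp only [Finsupp.mem_support_iff, Finsupp.add_apply]; omega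
      rw [if_pos h1, if_neg h2, if_pos h3, coeff_zero, add_zero, hp]
      rw [finsupp_sub_add_comm δ β i hd]
      congr 2
      refine Finset.prod_congr rfl fun j _ => ?_
      rcases eq_or_ne j i with rfl | hij
      · simp [hb, Nat.choose_zero_right]
      · simp [Finsupp.tsub_apply, Finsupp.add_apply, Finsupp.single_apply, Ne.symm hij]
    · -- both nonzero
      have h1 : i ∈ δ.support := by simp [Finsupp.mem_support_iff, hd]
      have h2 : i ∈ β.support := by simp [Finsupp.mem_support_iff, hb]
      have h3 : i ∈ (δ + β).support := by
        simp only [Finsupp.mem_support_iff, Finsupp.add_apply]; omega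
      rw [if_pos h1, if_pos h2, if_pos h3, hp, hp]
      have hidx1 : δ - Finsupp.single i 1 + β = δ + β - Finsupp.single i 1 :=
        finsupp_sub_add_comm δ β i hd
      have hidx2 : δ + (β - Finsupp.single i 1) = δ + β - Finsupp.single i 1 := by
        rw [add_comm δ (β - _), finsupp_sub_add_comm β δ i hb, add_comm β δ]
      rw [hidx1, hidx2, ← add_mul, ← Nat.cast_add]
      congr 2
      set ε : Fin m →₀ ℕ := δ + β - Finsupp.single i 1 with hε
      set β' : Fin m →₀ ℕ := β - Finsupp.single i 1 with hβ'
      have A1 := Finset.prod_eq_mul_prod_sdiff_singleton_of_mem (Finset.mem_univ i)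
        (fun j => (ε j).choose (β j))
      have A2 := Finset.prod_eq_mul_prod_sdiff_singleton_of_mem (Finset.mem_univ i)
        (fun j => (ε j).choose (β' j))
      have A3 := Finset.prod_eq_mul_prod_sdiff_singleton_of_mem (Finset.mem_univ i)
        (fun j => (((δ + β) j).choose (β j)))
      rw [A1, A2, A3]
      have htail : ∀ j ∈ Finset.univ \ {i},
          (ε j).choose (β' j) = ((δ + β) j).choose (β j) := by
        intro j hj
        simp only [Finset.mem_sdiff, Finset.mem_singleton] at hj
        simp [hε, hβ', Finsupp.tsub_apply, Finsupp.add_apply, Finsupp.single_apply, Ne.symm hj.2]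
      have htail2 : ∀ j ∈ Finset.univ \ {i},
          (ε j).choose (β j) = ((δ + β) j).choose (β j) := by
        intro j hj
        simp only [Finset.mem_sdiff, Finset.mem_singleton] at hj
        simp [hε, hβ', Finsupp.tsub_apply, Finsupp.add_apply, Finsupp.single_apply, Ne.symm hj.2]
      rw [Finset.prod_congr rfl htail, Finset.prod_congr rfl htail2, ← add_mul]
      congr 1
      have e1 : ε i = δ i + β i - 1 := by
        simp [hε, Finsupp.tsub_apply, Finsupp.add_apply, Finsupp.single_apply]
      have e2 : β' i = β i - 1 := by
        simp [hβ', Finsupp.tsub_apply, Finsupp.single_apply]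
      have e3 : (δ + β) i = δ i + β i := by simp [Finsupp.add_apply]
      rw [e1, e2, e3]
      obtain ⟨d, hd'⟩ : ∃ d, δ i = d + 1 := ⟨δ i - 1, by omega⟩
      obtain ⟨b, hb'⟩ : ∃ b, β i = b + 1 := ⟨β i - 1, by omega⟩
      rw [hd', hb']
      have t1 : d + 1 + (b + 1) - 1 = d + b + 1 := by omega
      have t2 : b + 1 - 1 = b := by omega
      have t3 : d + 1 + (b + 1) = (d + b + 1) + 1 := by omega
      rw [t1, t2, t3, Nat.choose_succ_succ']
      exact Nat.add_comm _ _

lemma nat_choose_assoc (d b g : ℕ) :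
    (d + g).choose g * (d + g + b).choose b
      = (b + g).choose b * (d + (b + g)).choose (b + g) := by
  have h1 : (d + g).choose g * (Nat.factorial d) * (Nat.factorial g) = Nat.factorial (d + g) :=
    Nat.add_choose_mul_factorial_mul_factorial d g
  have h2 : (d + g + b).choose b * Nat.factorial (d + g) * (Nat.factorial b) = Nat.factorial (d + g + b) :=
    Nat.add_choose_mul_factorial_mul_factorial (d + g) b
  have h3 : (b + g).choose b * (Nat.factorial g) * (Nat.factorial b) = Nat.factorial (b + g) := by
    have := Nat.add_choose_mul_factorial_mul_factorial g b
    rwa [Nat.add_comm g b] at this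
  have h4 : (d + (b + g)).choose (b + g) * (Nat.factorial d) * Nat.factorial (b + g) = Nat.factorial (d + (b + g)) :=
    Nat.add_choose_mul_factorial_mul_factorial d (b + g)
  have hK : 0 < Nat.factorial b * (Nat.factorial g * Nat.factorial d) := by positivity
  apply Nat.eq_of_mul_eq_mul_right hK
  have eL : (d + g).choose g * (d + g + b).choose b * ((Nat.factorial b) * ((Nat.factorial g) * (Nat.factorial d)))
      = Nat.factorial (d + g + b) := by
    calc (d + g).choose g * (d + g + b).choose b * ((Nat.factorial b) * ((Nat.factorial g) * (Nat.factorial d)))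
        = (d + g + b).choose b * ((d + g).choose g * (Nat.factorial d) * (Nat.factorial g)) * (Nat.factorial b) := by ring
      _ = (d + g + b).choose b * Nat.factorial (d + g) * (Nat.factorial b) := by rw [h1]
      _ = Nat.factorial (d + g + b) := h2
  have eR : (b + g).choose b * (d + (b + g)).choose (b + g) * ((Nat.factorial b) * ((Nat.factorial g) * (Nat.factorial d)))
      = Nat.factorial (d + (b + g)) := by
    calc (b + g).choose b * (d + (b + g)).choose (b + g) * ((Nat.factorial b) * ((Nat.factorial g) * (Nat.factorial d)))
        = (d + (b + g)).choose (b + g) * (Nat.factorial d) * ((b + g).choose b * (Nat.factorial g) * (Nat.factorial b)) := by ring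
      _ = (d + (b + g)).choose (b + g) * (Nat.factorial d) * Nat.factorial (b + g) := by rw [h3]
      _ = Nat.factorial (d + (b + g)) := h4
  rw [eL, eR]
  congr 1
  omega

lemma hasseDeriv_hasseDeriv (β γ : Fin m →₀ ℕ) (f : MvPolynomial (Fin m) F) :
    hasseDeriv γ (hasseDeriv β f)
      = (∏ j, ((β + γ) j).choose (β j) : ℕ) • hasseDeriv (β + γ) f := by
  ext δ
  rw [coeff_smul, coeff_hasseDeriv, coeff_hasseDeriv, coeff_hasseDeriv, nsmul_eq_mul]
  have hidx : δ + γ + β = δ + (β + γ) := by rw [add_assoc, add_comm γ β]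
  rw [hidx]
  have hN : (∏ j, ((δ + γ) j).choose (γ j)) * (∏ j, ((δ + (β + γ)) j).choose (β j))
      = (∏ j, ((β + γ) j).choose (β j)) * (∏ j, ((δ + (β + γ)) j).choose ((β + γ) j)) := by
    rw [← Finset.prod_mul_distrib, ← Finset.prod_mul_distrib]
    refine Finset.prod_congr rfl fun j _ => ?_
    simp only [Finsupp.add_apply]
    have hij : δ j + (β j + γ j) = δ j + γ j + β j := by omega
    have h := nat_choose_assoc (δ j) (β j) (γ j)
    rw [hij] at h ⊢
    exact h
  rw [← mul_assoc, ← Nat.cast_mul, hN, Nat.cast_mul, mul_assoc]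

end Aux

/-- `mult(P^{(β)}, a) ≥ mult(P, a) - |β|`. -/
theorem polyMult_hasseDeriv_ge {F : Type*} [Field F] [Fintype F]
    (q n : ℕ) (hq : IsPrimePow q) (hcard : Fintype.card F = q)
    (P : MvPolynomial (Fin n) F) (β : Fin n →₀ ℕ) (a : Fin n → F) :
    polyMult P a - ((∑ i, β i : ℕ) : ℕ∞) ≤ polyMult (hasseDeriv β P) a := by
  rw [tsub_le_iff_right]
  unfold polyMult
  refine iSup₂_le fun M hM => ?_
  simp only [Set.mem_setOf_eq] at hM
  set B : ℕ := ∑ i, β i with hB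
  have hmem : (M - B) ∈ {M' : ℕ | ∀ γ : Fin n →₀ ℕ, (∑ i, γ i) < M' →
      MvPolynomial.eval a (hasseDeriv γ (hasseDeriv β P)) = 0} := by
    intro γ hγ
    rw [hasseDeriv_hasseDeriv]
    have hsum : (∑ i, (β + γ) i) < M := by
      have : (∑ i, (β + γ) i) = B + ∑ i, γ i := by
        simp [Finsupp.add_apply, Finset.sum_add_distrib, hB]
      rw [this]
      omega
    rw [map_nsmul, hM (β + γ) hsum, smul_zero]
  have hle : ((M - B : ℕ) : ℕ∞) ≤ ⨆ M' ∈ {M' : ℕ | ∀ γ : Fin n →₀ ℕ, (∑ i, γ i) < M' →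
      MvPolynomial.eval a (hasseDeriv γ (hasseDeriv β P)) = 0}, (M' : ℕ∞) :=
    le_iSup₂ (f := fun (M' : ℕ) (_ : M' ∈ _) => (M' : ℕ∞)) (M - B) hmem
  calc (M : ℕ∞) ≤ ((M - B + B : ℕ) : ℕ∞) := by exact_mod_cast le_tsub_add
    _ = ((M - B : ℕ) : ℕ∞) + (B : ℕ∞) := by push_cast; rfl
    _ ≤ _ + (B : ℕ∞) := add_le_add_left hle _
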